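/- Let d ≥ 2, let c₁, …, c_d ≥ 0 with c = c₁ + ⋯ + c_d, let C be the d×d matrix all of whose rows equal (c₁, …, c_d), and assume M_C = (1−c)·1 + C is a Markov matrix (i.e., c ≤ 1 + cᵢ for all i). Then there exists an equal-input Markov generator Q (i.e., Q = C' − c'·1 for some matrix C' with equal nonnegative rows summing to c') with exp(Q) = M_C if and only if 0 ≤ c < 1. -/

import Mathlib

open Matrix NormedSpace

lemma aux_real_series (s : ℝ) :
    ∑' n : ℕ, ((Nat.factorial (n+1) : ℝ))⁻¹ * s ^ (n+1) = Real.exp s - 1 := by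
  have h := congrFun Real.exp_eq_exp_ℝ s
  rw [exp_eq_tsum ℝ] at h
  have hs : Summable fun n : ℕ => ((Nat.factorial (n+1) : ℝ))⁻¹ • s ^ (n+1) :=
    (expSeries_summable' (𝕂 := ℝ) s).comp_injective (add_left_injective 1)
  have h0 := tsum_eq_zero_add' (f := fun n : ℕ => ((Nat.factorial n : ℝ))⁻¹ • s ^ n) hs
  simp only [smul_eq_mul] at h0 h hs ⊢
  rw [h, h0]
  simp

lemma aux_pow_idem {d : ℕ} (P : Matrix (Fin d) (Fin d) ℝ) (hP : P * P = P) :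
    ∀ n : ℕ, P ^ (n + 1) = P := by
  intro n
  induction n with
  | zero => simp
  | succ k ih => rw [pow_succ, ih, hP]

lemma aux_exp_smul_idem {d : ℕ} (P : Matrix (Fin d) (Fin d) ℝ) (hP : P * P = P) (s : ℝ) :
    exp (s • P) = 1 + (Real.exp s - 1) • P := by
  letI : SeminormedRing (Matrix (Fin d) (Fin d) ℝ) := Matrix.linftyOpSemiNormedRing
  letI : NormedRing (Matrix (Fin d) (Fin d) ℝ) := Matrix.linftyOpNormedRing
  letI : NormedAlgebra ℝ (Matrix (Fin d) (Fin d) ℝ) := Matrix.linftyOpNormedAlgebra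
  rw [exp_eq_tsum ℝ]
  have hsum : Summable fun n : ℕ =>
      ((Nat.factorial (n+1) : ℝ))⁻¹ • (s • P) ^ (n + 1) :=
    (expSeries_summable' (𝕂 := ℝ) (s • P)).comp_injective (add_left_injective 1)
  have h0 := tsum_eq_zero_add'
    (f := fun n : ℕ => ((Nat.factorial n : ℝ))⁻¹ • (s • P) ^ n) hsum
  simp only []
  beta_reduce at h0
  rw [h0]
  congr 1
  · simp
  have hterm : ∀ n : ℕ, ((Nat.factorial (n+1) : ℝ))⁻¹ • (s • P) ^ (n + 1)
      = (((Nat.factorial (n+1) : ℝ))⁻¹ * s ^ (n+1)) • P := by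
    intro n
    rw [smul_pow, aux_pow_idem P hP, smul_smul]
  simp only [hterm]
  rw [Summable.tsum_smul_const, aux_real_series]
  have := (expSeries_summable' (𝕂 := ℝ) s).comp_injective (add_left_injective 1)
  exact this

lemma aux_exp_equal_input {d : ℕ} (c' : Fin d → ℝ) (ha : (∑ j, c' j) ≠ 0) :
    exp ((Matrix.of fun _ j => c' j) - (∑ j, c' j) • (1 : Matrix (Fin d) (Fin d) ℝ)) =
      Real.exp (-(∑ j, c' j)) • (1 : Matrix (Fin d) (Fin d) ℝ) +
        ((1 - Real.exp (-(∑ j, c' j))) / (∑ j, c' j)) • Matrix.of fun _ j => c' j := by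
  set a := ∑ j, c' j with ha'
  set C : Matrix (Fin d) (Fin d) ℝ := Matrix.of fun _ j => c' j with hCdef
  have hC2 : C * C = a • C := by
    ext i j
    simp [hCdef, Matrix.mul_apply, ← Finset.sum_mul, ha']
  have hP : (a⁻¹ • C) * (a⁻¹ • C) = a⁻¹ • C := by
    rw [smul_mul_smul_comm, hC2, smul_smul]
    congr 1
    field_simp
  have key : C = a • (a⁻¹ • C) := by
    rw [smul_smul, mul_inv_cancel₀ ha, one_smul]
  have hcomm : Commute ((-a) • (1 : Matrix (Fin d) (Fin d) ℝ)) C := by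
    unfold Commute SemiconjBy
    rw [smul_mul_assoc, one_mul, mul_smul_comm, mul_one]
  have hsplit : C - a • (1 : Matrix (Fin d) (Fin d) ℝ) = (-a) • 1 + C := by
    rw [neg_smul]; abel
  have hadd := Matrix.exp_add_of_commute (-a • (1 : Matrix (Fin d) (Fin d) ℝ)) C hcomm
  rw [hsplit, hadd, aux_exp_smul_idem 1 (by simp) (-a)]
  conv_lhs => rw [key, aux_exp_smul_idem _ hP a]
  have h1 : (1 : Matrix (Fin d) (Fin d) ℝ) + (Real.exp (-a) - 1) • 1
      = Real.exp (-a) • 1 := by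
    nth_rewrite 1 [← one_smul ℝ (1 : Matrix (Fin d) (Fin d) ℝ)]
    rw [← add_smul]; ring_nf
  rw [h1, smul_mul_assoc, one_mul, smul_add, smul_smul, smul_smul]
  congr 1
  rw [div_eq_mul_inv, mul_sub, ← Real.exp_add, neg_add_cancel, Real.exp_zero]
  ring

theorem equal_input_embeddable_iff (d : ℕ) (hd : 2 ≤ d)
    (c : Fin d → ℝ) (hc : ∀ i, 0 ≤ c i)
    (hMarkov : ∀ i, (∑ j, c j) ≤ 1 + c i)
    (M : Matrix (Fin d) (Fin d) ℝ)
    (hM : M = (1 - ∑ j, c j) • (1 : Matrix (Fin d) (Fin d) ℝ) +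
      Matrix.of fun _ j => c j) :
    (∃ c' : Fin d → ℝ, (∀ i, 0 ≤ c' i) ∧
        NormedSpace.exp ((Matrix.of fun _ j => c' j) -
          (∑ j, c' j) • (1 : Matrix (Fin d) (Fin d) ℝ)) = M) ↔
    (0 ≤ ∑ j, c j ∧ ∑ j, c j < 1) := by
  have hpick : ∀ j : Fin d, ∃ i : Fin d, i ≠ j := by
    intro j
    by_cases h : j = ⟨0, by omega⟩
    · exact ⟨⟨1, by omega⟩, by subst h; simp [Fin.ext_iff]⟩
    · exact ⟨⟨0, by omega⟩, fun hh => h hh.symm⟩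
  constructor
  · rintro ⟨c', hc', hexp⟩
    refine ⟨Finset.sum_nonneg fun i _ => hc i, ?_⟩
    by_cases ha : (∑ j, c' j) = 0
    · -- all c' is zero, exp = 1
      have hz : ∀ j, c' j = 0 := by
        intro j
        have := (Finset.sum_eq_zero_iff_of_nonneg (fun i _ => hc' i)).mp ha
        exact this j (Finset.mem_univ j)
      have harg : (Matrix.of fun _ j => c' j) -
          (∑ j, c' j) • (1 : Matrix (Fin d) (Fin d) ℝ) = 0 := by
        rw [ha, zero_smul, sub_zero]
        ext i j; simp [hz]
      rw [harg, NormedSpace.exp_zero] at hexp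
      have hcz : ∀ j, c j = 0 := by
        intro j
        obtain ⟨i, hij⟩ := hpick j
        have h2 := congrFun (congrFun (hexp.trans hM) i) j
        simpa [Matrix.add_apply, Matrix.smul_apply, Matrix.one_apply_ne hij] using h2.symm
      rw [Finset.sum_eq_zero fun j _ => hcz j]; norm_num
    · rw [aux_exp_equal_input c' ha] at hexp
      have hcj : ∀ j, c j = ((1 - Real.exp (-(∑ j, c' j))) / (∑ j, c' j)) * c' j := by
        intro j
        obtain ⟨i, hij⟩ := hpick j
        have h2 := congrFun (congrFun (hexp.trans hM) i) j
        simpa [Matrix.add_apply, Matrix.smul_apply, Matrix.one_apply_ne hij] using h2.symm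
      have hsum : (∑ j, c j) = 1 - Real.exp (-(∑ j, c' j)) := by
        rw [Finset.sum_congr rfl fun j _ => hcj j, ← Finset.mul_sum,
          div_mul_cancel₀ _ ha]
      rw [hsum]
      have := Real.exp_pos (-(∑ j, c' j))
      linarith
  · rintro ⟨h0, h1⟩
    by_cases hc0 : (∑ j, c j) = 0
    · refine ⟨fun _ => 0, fun _ => le_refl 0, ?_⟩
      have hz : ∀ j, c j = 0 := by
        intro j
        have := (Finset.sum_eq_zero_iff_of_nonneg (fun i _ => hc i)).mp hc0
        exact this j (Finset.mem_univ j)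
      have harg : (Matrix.of fun _ _ : Fin d => (0:ℝ)) -
          (∑ _j : Fin d, (0:ℝ)) • (1 : Matrix (Fin d) (Fin d) ℝ) = 0 := by
        ext i j; simp
      rw [harg, NormedSpace.exp_zero, hM, hc0]
      ext i j; simp [hz, Matrix.one_apply]
    · have hcpos : 0 < ∑ j, c j := lt_of_le_of_ne h0 (Ne.symm hc0)
      set t : ℝ := -Real.log (1 - ∑ j, c j) with htdef
      have hlog : Real.log (1 - ∑ j, c j) < 0 :=
        Real.log_neg (by linarith) (by linarith)
      have ht : 0 < t := by rw [htdef]; linarith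
      refine ⟨fun j => c j * (t / (∑ j, c j)), ?_, ?_⟩
      · intro i
        exact mul_nonneg (hc i) (div_nonneg ht.le hcpos.le)
      · have hsum : (∑ j, c j * (t / (∑ j, c j))) = t := by
          rw [← Finset.sum_mul, mul_div_cancel₀ _ hc0]
        rw [aux_exp_equal_input _ (by rw [hsum]; exact ht.ne')]
        rw [hsum]
        have hexp_t : Real.exp (-t) = 1 - ∑ j, c j := by
          rw [htdef, neg_neg, Real.exp_log (by linarith)]
        rw [hexp_t, hM]
        congr 1
        ext i j
        simp only [Matrix.smul_apply, Matrix.of_apply, smul_eq_mul]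
        rw [show (1 : ℝ) - (1 - ∑ j, c j) = ∑ j, c j by ring]
        field_simp
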